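/- Let H = L + W, with L the complete graph Laplacian on V vertices and W diagonal with a unique smallest entry at vertex m. Then the first excited eigenvector φ₁ satisfies φ₁(m)·φ₁(v) < 0 for all v ≠ m; i.e., the component at m has a sign opposite to all other components. -/

import Mathlib

open Matrix

/-- The `i`-th smallest eigenvalue (with multiplicity) of a Hermitian matrix. -/
noncomputable def sortedEig {n : ℕ} {A : Matrix (Fin n) (Fin n) ℝ}
    (hA : A.IsHermitian) (i : Fin n) : ℝ :=
  hA.eigenvalues (Tuple.sort hA.eigenvalues i)

/-- The combinatorial Laplacian of the complete graph on `V` vertices: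
`L = V·I − J`, where `J` is the all-ones matrix. -/
def cgL (V : ℕ) : Matrix (Fin V) (Fin V) ℝ :=
  (V : ℝ) • (1 : Matrix (Fin V) (Fin V) ℝ) - Matrix.of (fun _ _ => (1 : ℝ))

section Aux

lemma cgL_add_diagonal_apply {V : ℕ} (W : Fin V → ℝ) (u v : Fin V) :
    (cgL V + Matrix.diagonal W) u v = (if u = v then (V : ℝ) + W u else 0) - 1 := by
  simp [cgL, Matrix.one_apply, Matrix.diagonal_apply, Matrix.add_apply, Matrix.sub_apply]
  split
  · simp_all; ring
  · simp_all

lemma cgL_mulVec {V : ℕ} (W : Fin V → ℝ) (φ : Fin V → ℝ) (u : Fin V) :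
    ((cgL V + Matrix.diagonal W) *ᵥ φ) u = ((V:ℝ) + W u) * φ u - ∑ w, φ w := by
  simp only [Matrix.mulVec, dotProduct]
  simp only [cgL_add_diagonal_apply, sub_mul, ite_mul, zero_mul, one_mul]
  rw [Finset.sum_sub_distrib, Finset.sum_ite_eq (Finset.univ) u (fun w => ((V:ℝ) + W u) * φ w)]
  simp

/-- pointwise eigenvalue equation -/
lemma eig_pointwise {V : ℕ} (W : Fin V → ℝ) (φ : Fin V → ℝ) (μ : ℝ)
    (h : (cgL V + Matrix.diagonal W) *ᵥ φ = μ • φ) (u : Fin V) :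
    φ u * (((V:ℝ) + W u) - μ) = ∑ w, φ w := by
  have := congrFun h u
  rw [cgL_mulVec] at this
  simp only [Pi.smul_apply, smul_eq_mul] at this
  linarith [this]

/-- the quadratic form in terms of eigenvector expansion -/
lemma quad_form {V : ℕ} {A : Matrix (Fin V) (Fin V) ℝ} (hA : A.IsHermitian) (x : Fin V → ℝ) :
    x ⬝ᵥ (A *ᵥ x) = ∑ i, hA.eigenvalues i * ((hA.eigenvectorBasis i : Fin V → ℝ) ⬝ᵥ x)^2 := by
  have hsym : ∀ v : Fin V → ℝ, v ᵥ* A = A *ᵥ v := by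
    intro v
    have h : Aᵀ = A := by
      have := hA.eq; rwa [Matrix.conjTranspose_eq_transpose_of_trivial] at this
    rw [← h, Matrix.mulVec_transpose, h]
  have hP := (hA.eigenvectorBasis).sum_inner_mul_inner
      (WithLp.toLp 2 x : EuclideanSpace ℝ (Fin V)) (WithLp.toLp 2 (A *ᵥ x : Fin V → ℝ) : EuclideanSpace ℝ (Fin V))
  simp only [PiLp.inner_apply, RCLike.inner_apply', conj_trivial, PiLp.toLp_apply] at hP
  rw [show (x ⬝ᵥ (A *ᵥ x)) = ∑ i, x i * (A *ᵥ x) i from rfl]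
  rw [← hP]
  apply Finset.sum_congr rfl
  intro i _
  have hev : A *ᵥ (hA.eigenvectorBasis i : Fin V → ℝ)
      = hA.eigenvalues i • (hA.eigenvectorBasis i : Fin V → ℝ) := hA.mulVec_eigenvectorBasis i
  have h2 : (hA.eigenvectorBasis i : Fin V → ℝ) ⬝ᵥ (A *ᵥ x)
      = (A *ᵥ (hA.eigenvectorBasis i : Fin V → ℝ)) ⬝ᵥ x := by
    rw [dotProduct_mulVec, hsym]
  have h1 : ∑ k, (hA.eigenvectorBasis i : Fin V → ℝ) k * (A *ᵥ x) k
      = (hA.eigenvectorBasis i : Fin V → ℝ) ⬝ᵥ (A *ᵥ x) := rfl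
  rw [h1, h2, hev, smul_dotProduct]
  have h3 : ∑ k, x k * (hA.eigenvectorBasis i : Fin V → ℝ) k
      = (hA.eigenvectorBasis i : Fin V → ℝ) ⬝ᵥ x := by
    rw [dotProduct_comm]; rfl
  rw [h3, smul_eq_mul]; ring

lemma norm_form {V : ℕ} {A : Matrix (Fin V) (Fin V) ℝ} (hA : A.IsHermitian) (x : Fin V → ℝ) :
    x ⬝ᵥ x = ∑ i, ((hA.eigenvectorBasis i : Fin V → ℝ) ⬝ᵥ x)^2 := by
  have hP := (hA.eigenvectorBasis).sum_inner_mul_inner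
      (WithLp.toLp 2 x : EuclideanSpace ℝ (Fin V)) (WithLp.toLp 2 x : EuclideanSpace ℝ (Fin V))
  simp only [PiLp.inner_apply, RCLike.inner_apply', conj_trivial, PiLp.toLp_apply] at hP
  rw [show (x ⬝ᵥ x) = ∑ i, x i * x i from rfl, ← hP]
  apply Finset.sum_congr rfl
  intro i _
  have h3 : ∑ k, x k * (hA.eigenvectorBasis i : Fin V → ℝ) k
      = (hA.eigenvectorBasis i : Fin V → ℝ) ⬝ᵥ x := by
    rw [dotProduct_comm]; rfl
  have h4 : ∑ k, (hA.eigenvectorBasis i : Fin V → ℝ) k * x k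
      = (hA.eigenvectorBasis i : Fin V → ℝ) ⬝ᵥ x := rfl
  rw [h3, h4, sq]

/-- dot product of two eigenbasis vectors -/
lemma basis_dot {V : ℕ} {A : Matrix (Fin V) (Fin V) ℝ} (hA : A.IsHermitian) (i j : Fin V) :
    (hA.eigenvectorBasis i : Fin V → ℝ) ⬝ᵥ (hA.eigenvectorBasis j : Fin V → ℝ)
      = if i = j then 1 else 0 := by
  have h := orthonormal_iff_ite.mp (hA.eigenvectorBasis).orthonormal i j
  simp only [PiLp.inner_apply, RCLike.inner_apply', conj_trivial] at h
  exact h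

end Aux

/-- For `H = L + W` with `W` diagonal having a unique smallest entry at
`m`, any (nonzero) eigenvector `φ₁` of the first excited eigenvalue `λ₁` satisfies
`φ₁(m)·φ₁(v) < 0` for all `v ≠ m`. -/
theorem first_excited_sign {V : ℕ} (hV : 2 ≤ V) (W : Fin V → ℝ) (m : Fin V)
    (hmin : ∀ u : Fin V, u ≠ m → W m < W u)
    (hH : (cgL V + Matrix.diagonal W).IsHermitian)
    (φ₁ : Fin V → ℝ) (hφ₁ : φ₁ ≠ 0)
    (hEig : (cgL V + Matrix.diagonal W).mulVec φ₁ = sortedEig hH ⟨1, by omega⟩ • φ₁) :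
    ∀ v : Fin V, v ≠ m → φ₁ m * φ₁ v < 0 := by
  set A := cgL V + Matrix.diagonal W with hAdef
  set σ := Tuple.sort hH.eigenvalues with hσdef
  set n0 : Fin V := ⟨0, by omega⟩ with hn0
  set n1 : Fin V := ⟨1, by omega⟩ with hn1
  set lam0 : ℝ := hH.eigenvalues (σ n0) with hlam0
  set lam1 : ℝ := sortedEig hH n1 with hlam1
  have hlam1' : lam1 = hH.eigenvalues (σ n1) := rfl
  have hmono := Tuple.monotone_sort hH.eigenvalues
  -- lam0 is the min eigenvalue
  have hmin0 : ∀ i : Fin V, lam0 ≤ hH.eigenvalues i := by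
    intro i
    have : hH.eigenvalues i = (hH.eigenvalues ∘ σ) (σ.symm i) := by simp
    rw [this]
    exact hmono (Fin.mk_le_of_le_val (Nat.zero_le _))
  -- lam1 is below all eigenvalues except possibly the one at σ n0
  have hmin1 : ∀ i : Fin V, i ≠ σ n0 → lam1 ≤ hH.eigenvalues i := by
    intro i hi
    have hj : σ.symm i ≠ n0 := by
      intro h; apply hi; rw [← h]; simp
    have hj1 : n1 ≤ σ.symm i := by
      have : (σ.symm i).val ≠ 0 := by
        intro h; apply hj; exact Fin.ext h
      exact Fin.mk_le_of_le_val (by omega)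
    have : hH.eigenvalues i = (hH.eigenvalues ∘ σ) (σ.symm i) := by simp
    rw [this, hlam1']
    exact hmono hj1
  -- Rayleigh bounds
  have ray0 : ∀ x : Fin V → ℝ, lam0 * (x ⬝ᵥ x) ≤ x ⬝ᵥ (A *ᵥ x) := by
    intro x
    rw [quad_form hH, norm_form hH, Finset.mul_sum]
    apply Finset.sum_le_sum
    intro i _
    exact mul_le_mul_of_nonneg_right (hmin0 i) (sq_nonneg _)
  have ray1 : ∀ x : Fin V → ℝ,
      ((hH.eigenvectorBasis (σ n0) : Fin V → ℝ) ⬝ᵥ x = 0) →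
      lam1 * (x ⬝ᵥ x) ≤ x ⬝ᵥ (A *ᵥ x) := by
    intro x hx
    rw [quad_form hH, norm_form hH, Finset.mul_sum]
    apply Finset.sum_le_sum
    intro i _
    by_cases hi : i = σ n0
    · subst hi; rw [hx]; simp
    · exact mul_le_mul_of_nonneg_right (hmin1 i hi) (sq_nonneg _)
  -- Step 1: lam0 < V + W m
  have hstep1 : lam0 < (V:ℝ) + W m := by
    have h1 := ray0 (Pi.single m 1)
    have hxx : (Pi.single m 1 : Fin V → ℝ) ⬝ᵥ (Pi.single m 1) = 1 := by
      rw [dotProduct_single]; simp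
    have hAx : (Pi.single m 1 : Fin V → ℝ) ⬝ᵥ (A *ᵥ Pi.single m 1) = ((V:ℝ) + W m) - 1 := by
      rw [Matrix.mulVec_single, single_dotProduct, Pi.smul_apply, Matrix.col_apply, op_smul_eq_mul, hAdef, cgL_add_diagonal_apply]
      simp
    rw [hxx, hAx, mul_one] at h1
    linarith
  -- Step 2: the ground state φ₀ is nowhere zero
  set φ₀ : Fin V → ℝ := (hH.eigenvectorBasis (σ n0) : Fin V → ℝ) with hφ₀def
  have hφ₀eig : A *ᵥ φ₀ = lam0 • φ₀ := hH.mulVec_eigenvectorBasis (σ n0)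
  have hφ₀pt : ∀ u, φ₀ u * (((V:ℝ) + W u) - lam0) = ∑ w, φ₀ w :=
    eig_pointwise W φ₀ lam0 hφ₀eig
  have hd0 : ∀ u, 0 < ((V:ℝ) + W u) - lam0 := by
    intro u
    by_cases hu : u = m
    · subst hu; linarith
    · have := hmin u hu; linarith
  have hφ₀norm : φ₀ ⬝ᵥ φ₀ = 1 := by
    have := basis_dot hH (σ n0) (σ n0)
    rw [if_pos rfl] at this
    exact this
  have hS₀ : (∑ w, φ₀ w) ≠ 0 := by
    intro hS
    have hz : ∀ u, φ₀ u = 0 := by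
      intro u
      have := hφ₀pt u
      rw [hS] at this
      exact (mul_eq_zero.mp this).resolve_right (by linarith [hd0 u])
    rw [show φ₀ ⬝ᵥ φ₀ = ∑ w, φ₀ w * φ₀ w from rfl] at hφ₀norm
    simp [hz] at hφ₀norm
  have hφ₀ne : ∀ u, φ₀ u ≠ 0 := by
    intro u
    exact left_ne_zero_of_mul (by rw [hφ₀pt u]; exact hS₀)
  -- pointwise equation for φ₁
  have hpt : ∀ u, φ₁ u * (((V:ℝ) + W u) - lam1) = ∑ w, φ₁ w :=
    eig_pointwise W φ₁ lam1 hEig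
  -- Step 3a: lam1 ≠ V + W m
  have hne : lam1 ≠ (V:ℝ) + W m := by
    intro heq
    have hS : (∑ w, φ₁ w) = 0 := by
      have := hpt m; rw [heq] at this; simpa using this.symm
    have hz : ∀ u, u ≠ m → φ₁ u = 0 := by
      intro u hu
      have h := hpt u
      rw [hS, heq] at h
      have : ((V:ℝ) + W u) - ((V:ℝ) + W m) ≠ 0 := by have := hmin u hu; intro hc; linarith
      exact (mul_eq_zero.mp h).resolve_right this
    have hm : φ₁ m = 0 := by
      have : (∑ w, φ₁ w) = φ₁ m := by
        apply Finset.sum_eq_single m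
        · intro b _ hb; exact hz b hb
        · intro h; exact absurd (Finset.mem_univ m) h
      rw [this] at hS; exact hS
    apply hφ₁
    funext u
    by_cases hu : u = m
    · subst hu; exact hm
    · exact hz u hu
  -- Step 3b: ¬ (lam1 < V + W m)
  have hnlt : ¬ (lam1 < (V:ℝ) + W m) := by
    intro hlt
    -- second eigenbasis vector
    set ψ : Fin V → ℝ := (hH.eigenvectorBasis (σ n1) : Fin V → ℝ) with hψdef
    have hψeig : A *ᵥ ψ = lam1 • ψ := by
      rw [hlam1']; exact hH.mulVec_eigenvectorBasis (σ n1)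
    have hψpt : ∀ u, ψ u * (((V:ℝ) + W u) - lam1) = ∑ w, ψ w :=
      eig_pointwise W ψ lam1 hψeig
    have hd1 : ∀ u, 0 < ((V:ℝ) + W u) - lam1 := by
      intro u
      by_cases hu : u = m
      · subst hu; linarith
      · have := hmin u hu; linarith
    have hψnorm : ψ ⬝ᵥ ψ = 1 := by
      have := basis_dot hH (σ n1) (σ n1)
      rw [if_pos rfl] at this
      exact this
    have hS₁ : (∑ w, ψ w) ≠ 0 := by
      intro hS
      have hz : ∀ u, ψ u = 0 := by
        intro u
        have := hψpt u
        rw [hS] at this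
        exact (mul_eq_zero.mp this).resolve_right (by linarith [hd1 u])
      rw [show ψ ⬝ᵥ ψ = ∑ w, ψ w * ψ w from rfl] at hψnorm
      simp [hz] at hψnorm
    -- orthogonality
    have hij : σ n0 ≠ σ n1 := by
      intro h
      have h2 : (n0 : Fin V).val = (n1 : Fin V).val := congrArg Fin.val (σ.injective h)
      simp [hn0, hn1] at h2
    have horth : ∑ u, φ₀ u * ψ u = 0 := by
      have := basis_dot hH (σ n0) (σ n1)
      rw [if_neg hij] at this
      exact this
    -- each term has the sign of S₀ * S₁
    have hterm : ∀ u, φ₀ u * ψ u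
        = ((∑ w, φ₀ w) * (∑ w, ψ w)) / ((((V:ℝ) + W u) - lam0) * (((V:ℝ) + W u) - lam1)) := by
      intro u
      rw [← hφ₀pt u, ← hψpt u,
        eq_div_iff (mul_ne_zero (hd0 u).ne' (hd1 u).ne')]
      ring
    rcases lt_or_gt_of_ne (mul_ne_zero hS₀ hS₁) with hneg | hpos
    · have : 0 < ∑ u, -(φ₀ u * ψ u) := by
        apply Finset.sum_pos
        · intro u _
          rw [hterm u]
          simp only [neg_pos]
          exact div_neg_of_neg_of_pos hneg (mul_pos (hd0 u) (hd1 u))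
        · exact ⟨m, Finset.mem_univ m⟩
      rw [Finset.sum_neg_distrib] at this
      linarith [horth, this]
    · have : 0 < ∑ u, φ₀ u * ψ u := by
        apply Finset.sum_pos
        · intro u _
          rw [hterm u]
          exact div_pos hpos (mul_pos (hd0 u) (hd1 u))
        · exact ⟨m, Finset.mem_univ m⟩
      linarith [horth, this]
  have hstep3 : (V:ℝ) + W m < lam1 := by
    rcases lt_trichotomy lam1 ((V:ℝ) + W m) with h | h | h
    · exact absurd h hnlt
    · exact absurd h hne
    · exact h
  -- Step 4: lam1 < V + W u for all u ≠ m
  have hstep4 : ∀ u, u ≠ m → lam1 < (V:ℝ) + W u := by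
    intro u hu
    set a : ℝ := φ₀ u with ha
    set b : ℝ := -φ₀ m with hb
    set x : Fin V → ℝ := Pi.single m a + Pi.single u b with hx
    have hum : u ≠ m := hu
    have hxm : x m = a := by
      simp [hx, Pi.single_apply, hum]
    have hxu : x u = b := by
      simp [hx, Pi.single_apply, hum]
    have horth : φ₀ ⬝ᵥ x = 0 := by
      rw [hx, dotProduct_add, dotProduct_single, dotProduct_single]
      rw [ha, hb]; ring
    have hxx : x ⬝ᵥ x = a^2 + b^2 := by
      rw [show x ⬝ᵥ x = (Pi.single m a + Pi.single u b) ⬝ᵥ x from by rw [← hx]]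
      rw [add_dotProduct, single_dotProduct, single_dotProduct]
      rw [hxm, hxu]; ring
    have hAmm : A m m = ((V:ℝ) + W m) - 1 := by
      rw [hAdef, cgL_add_diagonal_apply]; simp
    have hAuu : A u u = ((V:ℝ) + W u) - 1 := by
      rw [hAdef, cgL_add_diagonal_apply]; simp
    have hAmu : A m u = -1 := by
      rw [hAdef, cgL_add_diagonal_apply]; simp [Ne.symm hum]
    have hAum : A u m = -1 := by
      rw [hAdef, cgL_add_diagonal_apply]; simp [hum]
    have hquad : x ⬝ᵥ (A *ᵥ x) = a^2 * (((V:ℝ) + W m) - 1) + b^2 * (((V:ℝ) + W u) - 1)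
        - 2 * a * b := by
      rw [show A *ᵥ x = A *ᵥ (Pi.single m a) + A *ᵥ (Pi.single u b) from by
        rw [hx, Matrix.mulVec_add]]
      rw [show x ⬝ᵥ (A *ᵥ Pi.single m a + A *ᵥ Pi.single u b)
          = (Pi.single m a + Pi.single u b) ⬝ᵥ (A *ᵥ Pi.single m a + A *ᵥ Pi.single u b) from by
        rw [← hx]]
      rw [Matrix.mulVec_single, Matrix.mulVec_single]
      rw [add_dotProduct, dotProduct_add, dotProduct_add]
      rw [single_dotProduct, single_dotProduct,
          single_dotProduct, single_dotProduct]
      simp only [Pi.smul_apply, Matrix.col_apply, op_smul_eq_mul, hAmm, hAuu, hAmu, hAum]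
      ring
    have hray := ray1 x horth
    rw [hxx, hquad] at hray
    have hane : a ≠ 0 := hφ₀ne u
    have ha2 : 0 < a^2 := by positivity
    have hWm : W m < W u := hmin u hu
    have hq : a^2 * (((V:ℝ) + W m) - 1) + b^2 * (((V:ℝ) + W u) - 1) - 2 * a * b
        < ((V:ℝ) + W u) * (a^2 + b^2) := by
      nlinarith [sq_nonneg (a + b)]
    have hlt : lam1 * (a^2 + b^2) < ((V:ℝ) + W u) * (a^2 + b^2) := lt_of_le_of_lt hray hq
    have hab : 0 < a^2 + b^2 := by positivity
    exact lt_of_mul_lt_mul_right (by linarith [hlt]) (le_of_lt hab)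
  -- Step 5: conclude
  intro v hv
  set S : ℝ := ∑ w, φ₁ w with hSdef
  have hdm : ((V:ℝ) + W m) - lam1 < 0 := by linarith
  have hdv : 0 < ((V:ℝ) + W v) - lam1 := by linarith [hstep4 v hv]
  have hSne : S ≠ 0 := by
    intro hS
    apply hφ₁
    funext u
    have h := hpt u
    rw [hS] at h
    rcases mul_eq_zero.mp h with h' | h'
    · exact h'
    · exfalso
      by_cases hu : u = m
      · subst hu; linarith
      · linarith [hstep4 u hu]
  have hm1 : φ₁ m * (((V:ℝ) + W m) - lam1) = S := hpt m
  have hv1 : φ₁ v * (((V:ℝ) + W v) - lam1) = S := hpt v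
  have hmne : φ₁ m ≠ 0 := left_ne_zero_of_mul (hm1 ▸ hSne)
  have hvne : φ₁ v ≠ 0 := left_ne_zero_of_mul (hv1 ▸ hSne)
  have hmS : φ₁ m * S < 0 := by
    rw [← hm1]
    have : φ₁ m * (φ₁ m * (((V:ℝ) + W m) - lam1)) = (φ₁ m)^2 * ((((V:ℝ) + W m) - lam1)) := by ring
    rw [this]
    exact mul_neg_of_pos_of_neg (by positivity) hdm
  have hvS : 0 < φ₁ v * S := by
    rw [← hv1]
    have : φ₁ v * (φ₁ v * (((V:ℝ) + W v) - lam1)) = (φ₁ v)^2 * ((((V:ℝ) + W v) - lam1)) := by ring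
    rw [this]
    exact mul_pos (by positivity) hdv
  have hS2 : 0 < S * S := mul_self_pos.mpr hSne
  nlinarith [mul_pos hvS hS2, hmS, hvS]
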